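/- Let μ = (μ₁, μ₂) ∈ ℝ² and define the linear functionals α(x) = (x₂ − x₁)/√2 and α*(x) = (x₁ + x₂)/√2 on ℝ². Assume α(μ) > 0. Then the function h : ℝ² → (0,∞) defined by h(x) = exp(α*(μ) α*(x)) · K_{α(μ)}(exp(−α(x))) is twice continuously differentiable and satisfies (1/2)Δh(x) = ((1/2) exp(−2α(x)) + (1/2)‖μ‖²) h(x) for all x ∈ ℝ². -/

import Mathlib

open Real

/-- The Macdonald function `K_μ(z) = (1/2) (z/2)^μ ∫_0^∞ t^{-1-μ} exp(-t - z²/(4t)) dt`. -/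
noncomputable def macdonaldK (μ z : ℝ) : ℝ :=
  (1 / 2) * (z / 2) ^ μ *
    ∫ t in Set.Ioi (0 : ℝ), t ^ (-1 - μ) * Real.exp (-t - z ^ 2 / (4 * t))



open MeasureTheory Set Filter Topology


noncomputable def besselJ (ν c : ℝ) : ℝ :=
  ∫ t in Set.Ioi (0:ℝ), t ^ (-1 - ν) * Real.exp (-t - c / t)

lemma abs_log_le (t : ℝ) (ht : 0 < t) :
    |Real.log t| ≤ 2 * Real.sqrt t + 2 / Real.sqrt t := by
  have hu : 0 < Real.sqrt t := Real.sqrt_pos.mpr ht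
  have hls : Real.log (Real.sqrt t) = Real.log t / 2 := Real.log_sqrt ht.le
  have h1 : Real.log (Real.sqrt t) ≤ Real.sqrt t - 1 := Real.log_le_sub_one_of_pos hu
  have h2 : Real.log (Real.sqrt t)⁻¹ ≤ (Real.sqrt t)⁻¹ - 1 :=
    Real.log_le_sub_one_of_pos (by positivity)
  rw [Real.log_inv] at h2
  have hinv : (Real.sqrt t)⁻¹ = 1 / Real.sqrt t := by rw [one_div]
  have h3 : |Real.log t| = 2 * |Real.log (Real.sqrt t)| := by
    rw [hls, abs_div]; norm_num; ring
  rw [h3]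
  have h2' : -Real.log (Real.sqrt t) ≤ 1 / Real.sqrt t := by
    rw [← hinv]; have : (0:ℝ) < (Real.sqrt t)⁻¹ := by positivity
    linarith
  have hh : 2 / Real.sqrt t = 2 * (1 / Real.sqrt t) := by ring
  have h1p : (0:ℝ) < 1 / Real.sqrt t := by positivity
  rcases abs_cases (Real.log (Real.sqrt t)) with ⟨he, _⟩ | ⟨he, _⟩ <;> rw [he] <;> linarith

lemma bessel_kernel_le (ν : ℝ) {c₀ c t : ℝ} (hc₀ : 0 < c₀) (hc : c₀ ≤ c) (ht : 0 < t) :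
    t ^ (-1 - ν) * Real.exp (-t - c / t) ≤
      Real.exp (2*(1+ν)^2 + 4*(1+ν)^2/c₀) * Real.exp (-(t/2) - c₀/(2*t)) := by
  set a : ℝ := |1 + ν| with ha
  have ha0 : 0 ≤ a := abs_nonneg _
  have ha2 : a ^ 2 = (1+ν)^2 := sq_abs _
  set s : ℝ := Real.sqrt t with hs
  have hs0 : 0 < s := Real.sqrt_pos.mpr ht
  have hst : s ^ 2 = t := Real.sq_sqrt ht.le
  have h1 : |Real.log t| ≤ 2 * s + 2 / s := abs_log_le t ht
  have h2 : 2 * a * s ≤ t / 2 + 2 * a ^ 2 := by nlinarith [sq_nonneg (s - 2*a)]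
  have h3 : 2 * a / s ≤ c₀ / (4 * t) + 4 * a ^ 2 / c₀ := by
    rw [div_add_div _ _ (by positivity) hc₀.ne', div_le_div_iff₀ hs0 (by positivity)]
    nlinarith [sq_nonneg (c₀ - 4 * a * s), hs0, hc₀]
  have hkey : Real.log t * (-1 - ν) ≤ a * |Real.log t| := by
    calc Real.log t * (-1 - ν) ≤ |Real.log t * (-1 - ν)| := le_abs_self _
    _ = |Real.log t| * a := by rw [abs_mul, ha, show (-1 - ν) = -(1+ν) by ring, abs_neg]
    _ = a * |Real.log t| := mul_comm _ _
  have hct : c₀ / t ≤ c / t := by gcongr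
  rw [Real.rpow_def_of_pos ht, ← Real.exp_add, ← Real.exp_add]
  apply Real.exp_le_exp.mpr
  have hmul : a * |Real.log t| ≤ a * (2 * s + 2 / s) := by
    exact mul_le_mul_of_nonneg_left h1 ha0
  have e1 : a * (2 * s + 2 / s) = 2*a*s + 2*a/s := by ring
  rw [← ha2]
  have h4 : c₀ / (4*t) + c₀/(2*t) ≤ c₀ / t := by
    rw [div_add_div _ _ (by positivity) (by positivity), div_le_div_iff₀ (by positivity) ht]
    ring_nf; nlinarith [hc₀, ht]
  linarith [hmul, h2, h3, hct, h4, hkey]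

lemma kernel_contOn (ν c : ℝ) :
    ContinuousOn (fun t : ℝ => t ^ (-1 - ν) * Real.exp (-t - c / t)) (Ioi 0) := by
  apply ContinuousOn.mul
  · intro t ht
    exact (Real.continuousAt_rpow_const t _ (Or.inl (ne_of_gt ht))).continuousWithinAt
  · apply Real.continuous_exp.comp_continuousOn
    exact (continuousOn_id.neg).sub (continuousOn_const.div continuousOn_id
      (fun t ht => ne_of_gt ht))

lemma integrableOn_kernel (ν : ℝ) {c : ℝ} (hc : 0 < c) :
    IntegrableOn (fun t : ℝ => t ^ (-1 - ν) * Real.exp (-t - c / t)) (Ioi 0) := by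
  set M : ℝ := Real.exp (2*(1+ν)^2 + 4*(1+ν)^2/c) with hM
  apply Integrable.mono' (g := fun t => M * Real.exp (-(1/2) * t))
  · exact (exp_neg_integrableOn_Ioi 0 (by norm_num : (0:ℝ) < 1/2)).const_mul M
  · exact (kernel_contOn ν c).aestronglyMeasurable measurableSet_Ioi
  · rw [ae_restrict_iff' measurableSet_Ioi]
    filter_upwards with t ht
    have ht' : (0:ℝ) < t := ht
    have hb := bessel_kernel_le ν hc le_rfl ht'
    have hnn : 0 ≤ t ^ (-1 - ν) * Real.exp (-t - c / t) := by positivity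
    rw [Real.norm_eq_abs, abs_of_nonneg hnn]
    refine hb.trans ?_
    gcongr
    have : 0 ≤ c / (2*t) := by positivity
    linarith



lemma kernel_hasDerivAt (ν : ℝ) {t : ℝ} (ht : 0 < t) (x : ℝ) :
    HasDerivAt (fun x : ℝ => t ^ (-1 - ν) * Real.exp (-t - x / t))
      (-(t ^ (-1 - (ν+1)) * Real.exp (-t - x / t))) x := by
  have h1 : HasDerivAt (fun x : ℝ => -t - x / t) (-(1/t)) x := by
    simpa using ((hasDerivAt_id x).div_const t).const_sub (-t)
  have h2 := (h1.exp).const_mul (t ^ (-1 - ν))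
  convert h2 using 1 <;> try rfl
  rw [show (-1 - (ν+1)) = (-1 - ν) + (-1) by ring, Real.rpow_add ht, Real.rpow_neg_one]
  field_simp

lemma hasDerivAt_besselJ (ν : ℝ) {c : ℝ} (hc : 0 < c) :
    HasDerivAt (fun x => besselJ ν x) (-besselJ (ν+1) c) c := by
  set M : ℝ := Real.exp (2*(1+(ν+1))^2 + 4*(1+(ν+1))^2/(c/2)) with hM
  have key := hasDerivAt_integral_of_dominated_loc_of_deriv_le
    (F := fun (x : ℝ) (t : ℝ) => t ^ (-1 - ν) * Real.exp (-t - x / t))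
    (F' := fun (x : ℝ) (t : ℝ) => -(t ^ (-1 - (ν+1)) * Real.exp (-t - x / t)))
    (x₀ := c) (s := Metric.ball c (c/2)) (μ := volume.restrict (Ioi 0))
    (bound := fun t => M * Real.exp (-(1/2) * t))
    (Metric.ball_mem_nhds c (by positivity))
    (Filter.Eventually.of_forall fun x =>
      ((kernel_contOn ν x).aestronglyMeasurable measurableSet_Ioi))
    (integrableOn_kernel ν hc)
    (((kernel_contOn (ν+1) c).aestronglyMeasurable measurableSet_Ioi).neg)
    ?_ ((exp_neg_integrableOn_Ioi 0 (by norm_num : (0:ℝ) < 1/2)).const_mul M) ?_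
  · have : (∫ t in Ioi (0:ℝ), -(t ^ (-1 - (ν+1)) * Real.exp (-t - c / t)))
        = -besselJ (ν+1) c := by
      rw [integral_neg]; rfl
    rw [this] at key
    exact key.2
  · rw [ae_restrict_iff' measurableSet_Ioi]
    filter_upwards with t ht x hx
    have ht' : (0:ℝ) < t := ht
    have hx' : c/2 ≤ x := by
      rw [Metric.mem_ball, Real.dist_eq, abs_lt] at hx
      linarith
    have hb := bessel_kernel_le (ν+1) (by positivity : (0:ℝ) < c/2) hx' ht'
    have hnn : 0 ≤ t ^ (-1 - (ν+1)) * Real.exp (-t - x / t) := by positivity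
    rw [norm_neg, Real.norm_eq_abs, abs_of_nonneg hnn]
    refine hb.trans ?_
    gcongr
    have : 0 ≤ (c/2) / (2*t) := by positivity
    linarith
  · rw [ae_restrict_iff' measurableSet_Ioi]
    filter_upwards with t ht x _
    exact kernel_hasDerivAt ν ht x



section rec
variable (ν : ℝ) {c : ℝ}

/-- the anti-derivative for integration by parts -/
private noncomputable def φ (ν c : ℝ) (t : ℝ) : ℝ := t ^ (-1 - ν) * Real.exp (-t - c / t)

private noncomputable def ψ (ν c : ℝ) (t : ℝ) : ℝ :=
  c * (t ^ (-1 - (ν+2)) * Real.exp (-t - c / t))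
    - (ν+1) * (t ^ (-1 - (ν+1)) * Real.exp (-t - c / t))
    - t ^ (-1 - ν) * Real.exp (-t - c / t)

lemma φ_hasDerivAt {t : ℝ} (ht : 0 < t) : HasDerivAt (φ ν c) (ψ ν c t) t := by
  have hu : HasDerivAt (fun t : ℝ => t ^ (-1 - ν)) ((-1 - ν) * t ^ (-1 - ν - 1)) t :=
    Real.hasDerivAt_rpow_const (Or.inl ht.ne')
  have hd : HasDerivAt (fun t : ℝ => c / t) (-c / t ^ 2) t := by
    convert (hasDerivAt_const t c).div (hasDerivAt_id t) ht.ne' using 1 <;> try rfl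
    simp
  have hv : HasDerivAt (fun t : ℝ => -t - c / t) (-1 + c / t ^ 2) t := by
    have := (hasDerivAt_id t).neg.sub hd
    convert this using 1 <;> try rfl
    ring
  have h := hu.mul hv.exp
  convert h using 1 <;> try rfl
  have e1 : t ^ (-1 - ν - 1) = t ^ (-1 - (ν+1)) := by congr 1; ring
  have e2 : t ^ (-1 - ν) * (c / t ^ 2) = c * t ^ (-1 - (ν+2)) := by
    rw [show (-1 - ν : ℝ) = (-1 - (ν+2)) + 2 by ring, Real.rpow_add ht,
      show ((2:ℝ)) = ((2:ℕ) : ℝ) by norm_num, Real.rpow_natCast]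
    field_simp
  simp only [ψ, φ, e1]
  have : t ^ (-1 - ν) * (Real.exp (-t - c / t) * (-1 + c / t ^ 2))
      = t ^ (-1 - ν) * (c / t ^ 2) * Real.exp (-t - c / t)
        - t ^ (-1 - ν) * Real.exp (-t - c / t) := by ring
  rw [this, e2]
  ring

lemma integrableOn_ψ (hc : 0 < c) : IntegrableOn (ψ ν c) (Ioi 0) := by
  exact (((integrableOn_kernel (ν+2) hc).const_mul c).sub
    ((integrableOn_kernel (ν+1) hc).const_mul (ν+1))).sub (integrableOn_kernel ν hc)

lemma φ_tendsto_atTop (hc : 0 < c) : Tendsto (φ ν c) atTop (𝓝 0) := by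
  set M : ℝ := Real.exp (2*(1+ν)^2 + 4*(1+ν)^2/c) with hM
  have hg : Tendsto (fun t : ℝ => M * Real.exp (-(t/2))) atTop (𝓝 0) := by
    have h1 : Tendsto (fun t : ℝ => -(t/2)) atTop atBot := by
      apply tendsto_neg_atBot_iff.mpr
      exact tendsto_id.atTop_div_const (by norm_num)
    have := (Real.tendsto_exp_atBot).comp h1
    simpa using this.const_mul M
  apply squeeze_zero' (f := φ ν c) (g := fun t => M * Real.exp (-(t/2)))
  · filter_upwards [eventually_gt_atTop (0:ℝ)] with t ht
    simp only [φ]; positivity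
  · filter_upwards [eventually_gt_atTop (0:ℝ)] with t ht
    simp only [φ]
    refine (bessel_kernel_le ν hc le_rfl ht).trans ?_
    refine mul_le_mul_of_nonneg_left ?_ (by positivity)
    apply Real.exp_le_exp.mpr
    have : 0 ≤ c / (2*t) := by positivity
    linarith
  · exact hg

lemma φ_tendsto_zero (hc : 0 < c) : Tendsto (φ ν c) (𝓝[>] (0:ℝ)) (𝓝 0) := by
  set M : ℝ := Real.exp (2*(1+ν)^2 + 4*(1+ν)^2/c) with hM
  have hg : Tendsto (fun t : ℝ => M * Real.exp (-(c/(2*t)))) (𝓝[>] (0:ℝ)) (𝓝 0) := by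
    have h1 : Tendsto (fun t : ℝ => c/(2*t)) (𝓝[>] (0:ℝ)) atTop := by
      have h2 : Tendsto (fun t : ℝ => t⁻¹) (𝓝[>] (0:ℝ)) atTop := tendsto_inv_nhdsGT_zero
      have h3 := h2.const_mul_atTop (show (0:ℝ) < c/2 by positivity)
      refine h3.congr fun t => by field_simp
    have := (Real.tendsto_exp_atBot).comp (tendsto_neg_atBot_iff.mpr h1)
    simpa [Function.comp] using this.const_mul M
  apply squeeze_zero' (f := φ ν c) (g := fun t => M * Real.exp (-(c/(2*t))))
  · filter_upwards [self_mem_nhdsWithin] with t (ht : (0:ℝ) < t)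
    simp only [φ]; positivity
  · filter_upwards [self_mem_nhdsWithin] with t (ht : (0:ℝ) < t)
    simp only [φ]
    refine (bessel_kernel_le ν hc le_rfl ht).trans ?_
    refine mul_le_mul_of_nonneg_left ?_ (by positivity)
    apply Real.exp_le_exp.mpr
    have : (0:ℝ) ≤ t/2 := by positivity
    linarith
  · exact hg

lemma integral_ψ_Ioi (hc : 0 < c) {a : ℝ} (ha : 0 < a) :
    ∫ t in Ioi a, ψ ν c t = -φ ν c a := by
  have := integral_Ioi_of_hasDerivAt_of_tendsto'
    (f := φ ν c) (f' := ψ ν c) (a := a)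
    (fun x hx => φ_hasDerivAt ν (lt_of_lt_of_le ha hx))
    ((integrableOn_ψ ν hc).mono_set (Ioi_subset_Ioi ha.le))
    (φ_tendsto_atTop ν hc)
  rw [this]; ring

lemma besselJ_identity (hc : 0 < c) :
    c * besselJ (ν+2) c = (ν+1) * besselJ (ν+1) c + besselJ ν c := by
  have hU : (⋃ n : ℕ, Ioi ((n+1:ℝ)⁻¹)) = Ioi (0:ℝ) := by
    ext x
    simp only [mem_iUnion, mem_Ioi]
    constructor
    · rintro ⟨n, hn⟩; exact lt_trans (by positivity) hn
    · intro hx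
      obtain ⟨n, hn⟩ := exists_nat_one_div_lt hx
      exact ⟨n, by rwa [one_div] at hn⟩
  have hmono : Monotone (fun n : ℕ => Ioi ((n+1:ℝ)⁻¹)) := by
    intro n m hnm
    apply Ioi_subset_Ioi
    have : (n:ℝ) ≤ m := by exact_mod_cast hnm
    gcongr
  have h1 := tendsto_setIntegral_of_monotone
    (fun n : ℕ => measurableSet_Ioi) hmono (by rw [hU]; exact integrableOn_ψ ν hc)
  rw [hU] at h1
  have h2 : (fun n : ℕ => ∫ t in Ioi ((n+1:ℝ)⁻¹), ψ ν c t)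
      = fun n : ℕ => -φ ν c ((n+1:ℝ)⁻¹) := by
    funext n
    exact integral_ψ_Ioi ν hc (by positivity)
  rw [h2] at h1
  have h3 : Tendsto (fun n : ℕ => -φ ν c ((n+1:ℝ)⁻¹)) atTop (𝓝 0) := by
    have hseq : Tendsto (fun n : ℕ => ((n+1:ℝ)⁻¹)) atTop (𝓝[>] (0:ℝ)) := by
      apply tendsto_nhdsWithin_of_tendsto_nhds_of_eventually_within
      · have := tendsto_one_div_add_atTop_nhds_zero_nat (𝕜 := ℝ)
        simpa [one_div] using this
      · filter_upwards with n
        exact mem_Ioi.mpr (by positivity)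
    have := (φ_tendsto_zero ν hc).comp hseq
    simpa using this.neg
  have hz : (∫ t in Ioi (0:ℝ), ψ ν c t) = 0 := tendsto_nhds_unique h1 h3
  have hsplit : (∫ t in Ioi (0:ℝ), ψ ν c t)
      = c * besselJ (ν+2) c - (ν+1) * besselJ (ν+1) c - besselJ ν c := by
    unfold ψ besselJ
    have hi2 : IntegrableOn (fun t : ℝ => c * (t ^ (-1 - (ν+2)) * Real.exp (-t - c / t)))
        (Ioi 0) := (integrableOn_kernel (ν+2) hc).const_mul c
    have hi1 : IntegrableOn (fun t : ℝ => (ν+1) * (t ^ (-1 - (ν+1)) * Real.exp (-t - c / t)))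
        (Ioi 0) := (integrableOn_kernel (ν+1) hc).const_mul (ν+1)
    have hi12 : IntegrableOn (fun t : ℝ => c * (t ^ (-1 - (ν+2)) * Real.exp (-t - c / t))
        - (ν+1) * (t ^ (-1 - (ν+1)) * Real.exp (-t - c / t))) (Ioi 0) := hi2.sub hi1
    rw [integral_sub hi12 (integrableOn_kernel ν hc), integral_sub hi2 hi1,
      MeasureTheory.integral_const_mul, MeasureTheory.integral_const_mul]
  rw [hsplit] at hz
  linarith
end rec





/-- first derivative of `r ↦ macdonaldK ν (exp (-r))` -/
noncomputable def KD (ν r : ℝ) : ℝ :=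
  (1/2) * Real.exp ((-r - Real.log 2) * ν) *
    (-ν * besselJ ν (Real.exp (-2*r)/4)
      + 2 * (Real.exp (-2*r)/4) * besselJ (ν+1) (Real.exp (-2*r)/4))

lemma macdonaldK_exp (ν r : ℝ) :
    macdonaldK ν (Real.exp (-r))
      = (1/2) * Real.exp ((-r - Real.log 2) * ν) * besselJ ν (Real.exp (-2*r)/4) := by
  unfold macdonaldK besselJ
  congr 1
  · congr 1
    rw [Real.rpow_def_of_pos (by positivity), Real.log_div (Real.exp_ne_zero _) two_ne_zero,
      Real.log_exp]
  · congr 1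
    funext t
    congr 1
    have h2 : Real.exp (-r) ^ 2 = Real.exp (-2*r) := by
      rw [sq, ← Real.exp_add]; ring_nf
    rw [h2, div_div]

lemma hasDerivAt_cfun (r : ℝ) :
    HasDerivAt (fun r : ℝ => Real.exp (-2*r)/4) (-2 * (Real.exp (-2*r)/4)) r := by
  have h := (((hasDerivAt_id r).const_mul (-2)).exp).div_const 4
  simp only [id_eq] at h
  convert h using 1 <;> try rfl
  ring

lemma hasDerivAt_g (ν r : ℝ) :
    HasDerivAt (fun r : ℝ => besselJ ν (Real.exp (-2*r)/4))
      (2 * (Real.exp (-2*r)/4) * besselJ (ν+1) (Real.exp (-2*r)/4)) r := by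
  have hc : (0:ℝ) < Real.exp (-2*r)/4 := by positivity
  have h := (hasDerivAt_besselJ ν hc).comp r (hasDerivAt_cfun r)
  convert h using 1 <;> try rfl
  ring

lemma hasDerivAt_P (ν r : ℝ) :
    HasDerivAt (fun r : ℝ => Real.exp ((-r - Real.log 2) * ν))
      (-ν * Real.exp ((-r - Real.log 2) * ν)) r := by
  have h := (((hasDerivAt_id r).neg.sub_const (Real.log 2)).mul_const ν).exp
  simp only [id_eq, Pi.neg_apply] at h
  convert h using 1 <;> try rfl
  ring

lemma hasDerivAt_Kf (ν r : ℝ) :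
    HasDerivAt (fun r : ℝ => macdonaldK ν (Real.exp (-r))) (KD ν r) r := by
  have he : (fun r : ℝ => macdonaldK ν (Real.exp (-r)))
      = fun r : ℝ => (1/2) * Real.exp ((-r - Real.log 2) * ν)
          * besselJ ν (Real.exp (-2*r)/4) := funext (macdonaldK_exp ν)
  rw [he]
  have h := ((hasDerivAt_P ν r).const_mul (1/2)).mul (hasDerivAt_g ν r)
  convert h using 1 <;> try rfl
  unfold KD
  ring

lemma hasDerivAt_KD (ν r : ℝ) :
    HasDerivAt (fun r : ℝ => KD ν r)
      ((ν^2 + Real.exp (-2*r)) * macdonaldK ν (Real.exp (-r))) r := by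
  have hc : (0:ℝ) < Real.exp (-2*r)/4 := by positivity
  have hinner : HasDerivAt (fun r : ℝ =>
      -ν * besselJ ν (Real.exp (-2*r)/4)
        + 2 * (Real.exp (-2*r)/4) * besselJ (ν+1) (Real.exp (-2*r)/4))
      (-ν * (2 * (Real.exp (-2*r)/4) * besselJ (ν+1) (Real.exp (-2*r)/4))
        + (2 * (-2 * (Real.exp (-2*r)/4)) * besselJ (ν+1) (Real.exp (-2*r)/4)
          + 2 * (Real.exp (-2*r)/4) *
            (2 * (Real.exp (-2*r)/4) * besselJ (ν+1+1) (Real.exp (-2*r)/4)))) r := by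
    refine ((hasDerivAt_g ν r).const_mul (-ν)).add ?_
    have h1 := ((hasDerivAt_cfun r).const_mul 2).mul (hasDerivAt_g (ν+1) r)
    convert h1 using 1 <;> try rfl
  have h := ((hasDerivAt_P ν r).const_mul (1/2)).mul hinner
  have heq : (fun r : ℝ => KD ν r) = fun r : ℝ =>
      (1/2) * Real.exp ((-r - Real.log 2) * ν) *
        (-ν * besselJ ν (Real.exp (-2*r)/4)
          + 2 * (Real.exp (-2*r)/4) * besselJ (ν+1) (Real.exp (-2*r)/4)) := rfl
  rw [heq]
  convert h using 1 <;> try rfl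
  rw [macdonaldK_exp]
  have hrec := besselJ_identity ν hc
  have h4 : Real.exp (-2*r) = 4 * (Real.exp (-2*r)/4) := by ring
  rw [show ν + 1 + 1 = ν + 2 by ring]
  linear_combination (-2 * Real.exp ((-r - Real.log 2) * ν) * (Real.exp (-2*r)/4)) * hrec

lemma contDiff_Kf (ν : ℝ) :
    ContDiff ℝ 2 (fun r : ℝ => macdonaldK ν (Real.exp (-r))) := by
  have hder : deriv (fun r : ℝ => macdonaldK ν (Real.exp (-r))) = KD ν :=
    funext fun r => (hasDerivAt_Kf ν r).deriv
  have hder2 : deriv (KD ν) = fun r => (ν^2 + Real.exp (-2*r)) * macdonaldK ν (Real.exp (-r)) :=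
    funext fun r => (hasDerivAt_KD ν r).deriv
  rw [show (2 : WithTop ℕ∞) = 1 + 1 from rfl, contDiff_succ_iff_deriv]
  refine ⟨fun r => (hasDerivAt_Kf ν r).differentiableAt, by simp, ?_⟩
  rw [hder, contDiff_one_iff_deriv]
  refine ⟨fun r => (hasDerivAt_KD ν r).differentiableAt, ?_⟩
  rw [hder2]
  have hdiffble : Differentiable ℝ (fun r : ℝ => macdonaldK ν (Real.exp (-r))) :=
    fun r => (hasDerivAt_Kf ν r).differentiableAt
  exact (continuous_const.add
    (Real.continuous_exp.comp (continuous_const.mul continuous_id))).mul hdiffble.continuous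







noncomputable def Scl : (Fin 2 → ℝ) →L[ℝ] ℝ :=
  (Real.sqrt 2)⁻¹ • ((ContinuousLinearMap.proj 0 : (Fin 2 → ℝ) →L[ℝ] ℝ)
    + (ContinuousLinearMap.proj 1 : (Fin 2 → ℝ) →L[ℝ] ℝ))

noncomputable def Rcl : (Fin 2 → ℝ) →L[ℝ] ℝ :=
  (Real.sqrt 2)⁻¹ • ((ContinuousLinearMap.proj 1 : (Fin 2 → ℝ) →L[ℝ] ℝ)
    - (ContinuousLinearMap.proj 0 : (Fin 2 → ℝ) →L[ℝ] ℝ))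

lemma Scl_apply (x : Fin 2 → ℝ) : Scl x = (x 0 + x 1) / Real.sqrt 2 := by
  simp [Scl, div_eq_inv_mul]; ring

lemma Rcl_apply (x : Fin 2 → ℝ) : Rcl x = (x 1 - x 0) / Real.sqrt 2 := by
  simp [Rcl, div_eq_inv_mul]

section R2
variable (a ν : ℝ)

noncomputable def Efun (a : ℝ) : (Fin 2 → ℝ) → ℝ := fun x => Real.exp (a * Scl x)
noncomputable def Bfun (a ν : ℝ) : (Fin 2 → ℝ) → ℝ :=
  fun x => Efun a x * macdonaldK ν (Real.exp (-(Rcl x)))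
noncomputable def Afun (a ν : ℝ) : (Fin 2 → ℝ) → ℝ := fun x => Efun a x * KD ν (Rcl x)

lemma hasFDerivAt_E (x : Fin 2 → ℝ) :
    HasFDerivAt (Efun a) ((a * Efun a x) • Scl) x := by
  have hs : HasFDerivAt (fun x : Fin 2 → ℝ => Scl x) Scl x := Scl.hasFDerivAt
  have hu : HasDerivAt (fun t : ℝ => Real.exp (a * t)) (a * Real.exp (a * Scl x)) (Scl x) := by
    have := ((hasDerivAt_id (Scl x)).const_mul a).exp
    simp only [id_eq] at this
    convert this using 1 <;> try rfl
    ring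
  exact hu.comp_hasFDerivAt x hs

lemma hasFDerivAt_Kf2 (x : Fin 2 → ℝ) :
    HasFDerivAt (fun x : Fin 2 → ℝ => macdonaldK ν (Real.exp (-(Rcl x))))
      (KD ν (Rcl x) • Rcl) x :=
  (hasDerivAt_Kf ν (Rcl x)).comp_hasFDerivAt x Rcl.hasFDerivAt

lemma hasFDerivAt_KD2 (x : Fin 2 → ℝ) :
    HasFDerivAt (fun x : Fin 2 → ℝ => KD ν (Rcl x))
      (((ν^2 + Real.exp (-2*(Rcl x))) * macdonaldK ν (Real.exp (-(Rcl x)))) • Rcl) x :=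
  (hasDerivAt_KD ν (Rcl x)).comp_hasFDerivAt x Rcl.hasFDerivAt

lemma hasFDerivAt_B (x : Fin 2 → ℝ) :
    HasFDerivAt (Bfun a ν)
      (Efun a x • (KD ν (Rcl x) • Rcl)
        + macdonaldK ν (Real.exp (-(Rcl x))) • ((a * Efun a x) • Scl)) x :=
  (hasFDerivAt_E a x).mul (hasFDerivAt_Kf2 ν x)

lemma hasFDerivAt_A (x : Fin 2 → ℝ) :
    HasFDerivAt (Afun a ν)
      (Efun a x • (((ν^2 + Real.exp (-2*(Rcl x))) * macdonaldK ν (Real.exp (-(Rcl x)))) • Rcl)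
        + KD ν (Rcl x) • ((a * Efun a x) • Scl)) x :=
  (hasFDerivAt_E a x).mul (hasFDerivAt_KD2 ν x)

lemma fderiv_B_apply (y : Fin 2 → ℝ) (v : Fin 2 → ℝ) :
    fderiv ℝ (Bfun a ν) y v
      = Efun a y * KD ν (Rcl y) * Rcl v
        + a * Bfun a ν y * Scl v := by
  rw [(hasFDerivAt_B a ν y).fderiv]
  simp [Bfun, smul_eq_mul]
  ring

lemma contDiff_B : ContDiff ℝ 2 (Bfun a ν) := by
  have h1 : ContDiff ℝ 2 (Efun a) := by
    have : ContDiff ℝ 2 (fun x : Fin 2 → ℝ => a * Scl x) := contDiff_const.mul Scl.contDiff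
    exact Real.contDiff_exp.comp this
  have h2 : ContDiff ℝ 2 (fun x : Fin 2 → ℝ => macdonaldK ν (Real.exp (-(Rcl x)))) :=
    (contDiff_Kf ν).comp Rcl.contDiff
  exact h1.mul h2
end R2

/-- with `α(x) = (x₂−x₁)/√2`, `α*(x) = (x₁+x₂)/√2` on `ℝ²` and `α(μ) > 0`,
the function `h(x) = exp(α*(μ)α*(x)) K_{α(μ)}(exp(−α(x)))` is `C²` and satisfies
`(1/2)Δh(x) = ((1/2) e^{−2α(x)} + (1/2)‖μ‖²) h(x)`. -/
theorem explicit_eigenfunction_A1_in_R2 (μ : Fin 2 → ℝ)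
    (hμ : 0 < (μ 1 - μ 0) / Real.sqrt 2) :
    ContDiff ℝ 2 (fun x : Fin 2 → ℝ =>
      Real.exp ((μ 0 + μ 1) / Real.sqrt 2 * ((x 0 + x 1) / Real.sqrt 2)) *
        macdonaldK ((μ 1 - μ 0) / Real.sqrt 2) (Real.exp (-((x 1 - x 0) / Real.sqrt 2)))) ∧
    ∀ x : Fin 2 → ℝ,
      (1 / 2) * ∑ j, fderiv ℝ (fun y : Fin 2 → ℝ =>
          fderiv ℝ (fun z : Fin 2 → ℝ =>
            Real.exp ((μ 0 + μ 1) / Real.sqrt 2 * ((z 0 + z 1) / Real.sqrt 2)) *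
              macdonaldK ((μ 1 - μ 0) / Real.sqrt 2)
                (Real.exp (-((z 1 - z 0) / Real.sqrt 2)))) y (Pi.single j 1)) x (Pi.single j 1)
        = ((1 / 2) * Real.exp (-2 * ((x 1 - x 0) / Real.sqrt 2))
            + (1 / 2) * (μ 0 ^ 2 + μ 1 ^ 2)) *
          (Real.exp ((μ 0 + μ 1) / Real.sqrt 2 * ((x 0 + x 1) / Real.sqrt 2)) *
            macdonaldK ((μ 1 - μ 0) / Real.sqrt 2)
              (Real.exp (-((x 1 - x 0) / Real.sqrt 2)))) := by
  set a : ℝ := (μ 0 + μ 1) / Real.sqrt 2 with ha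
  set ν : ℝ := (μ 1 - μ 0) / Real.sqrt 2 with hν
  have hsq2 : Real.sqrt 2 * Real.sqrt 2 = 2 := Real.mul_self_sqrt (by norm_num)
  have hsq2pos : (0:ℝ) < Real.sqrt 2 := Real.sqrt_pos.mpr (by norm_num)
  have hgoalfun : (fun x : Fin 2 → ℝ =>
      Real.exp (a * ((x 0 + x 1) / Real.sqrt 2)) *
        macdonaldK ν (Real.exp (-((x 1 - x 0) / Real.sqrt 2)))) = Bfun a ν := by
    funext x
    rw [Bfun, Efun, Scl_apply, Rcl_apply]
  rw [hgoalfun]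
  refine ⟨contDiff_B a ν, ?_⟩
  intro x
  have hinner : ∀ j : Fin 2, (fun y : Fin 2 → ℝ => fderiv ℝ (Bfun a ν) y (Pi.single j 1))
      = fun y => Afun a ν y * Rcl (Pi.single j 1) + (a * Scl (Pi.single j 1)) * Bfun a ν y := by
    intro j
    funext y
    rw [fderiv_B_apply]
    rw [Afun]
    ring
  have houter : ∀ j : Fin 2,
      fderiv ℝ (fun y => Afun a ν y * Rcl (Pi.single j 1)
        + (a * Scl (Pi.single j 1)) * Bfun a ν y) x (Pi.single j 1)
      = (Efun a x * ((ν^2 + Real.exp (-2*(Rcl x))) * macdonaldK ν (Real.exp (-(Rcl x)))) * Rcl (Pi.single j 1)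
          + KD ν (Rcl x) * (a * Efun a x) * Scl (Pi.single j 1)) * Rcl (Pi.single j 1)
        + (a * Scl (Pi.single j 1)) * (Efun a x * KD ν (Rcl x) * Rcl (Pi.single j 1)
          + macdonaldK ν (Real.exp (-(Rcl x))) * (a * Efun a x) * Scl (Pi.single j 1)) := by
    intro j
    have hG : HasFDerivAt (fun y => Afun a ν y * Rcl (Pi.single j 1)
        + (a * Scl (Pi.single j 1)) * Bfun a ν y)
        ((Rcl (Pi.single j 1)) • (Efun a x • (((ν^2 + Real.exp (-2*(Rcl x))) *
            macdonaldK ν (Real.exp (-(Rcl x)))) • Rcl) + KD ν (Rcl x) • ((a * Efun a x) • Scl))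
          + (a * Scl (Pi.single j 1)) • (Efun a x • (KD ν (Rcl x) • Rcl)
            + macdonaldK ν (Real.exp (-(Rcl x))) • ((a * Efun a x) • Scl))) x := by
      have h1 := (hasFDerivAt_A a ν x).mul_const (Rcl (Pi.single j 1))
      have h2 := (hasFDerivAt_B a ν x).const_mul (a * Scl (Pi.single j 1))
      exact h1.add h2
    rw [hG.fderiv]
    simp [smul_eq_mul]
    ring
  rw [Fin.sum_univ_two, hinner 0, hinner 1, houter 0, houter 1]
  have hr0 : Rcl (Pi.single (0 : Fin 2) 1) = -(1 / Real.sqrt 2) := by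
    rw [Rcl_apply]; simp; ring
  have hr1 : Rcl (Pi.single (1 : Fin 2) 1) = 1 / Real.sqrt 2 := by
    rw [Rcl_apply]; simp
  have hs0 : Scl (Pi.single (0 : Fin 2) 1) = 1 / Real.sqrt 2 := by
    rw [Scl_apply]; simp
  have hs1 : Scl (Pi.single (1 : Fin 2) 1) = 1 / Real.sqrt 2 := by
    rw [Scl_apply]; simp
  rw [hr0, hr1, hs0, hs1]
  have hRx : Rcl x = (x 1 - x 0) / Real.sqrt 2 := Rcl_apply x
  have hmu : μ 0 ^ 2 + μ 1 ^ 2 = a^2 + ν^2 := by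
    rw [ha, hν]
    field_simp
    rw [Real.sq_sqrt (by norm_num)]
    ring
  have hE : Real.exp (a * ((x 0 + x 1) / Real.sqrt 2)) = Efun a x := by
    rw [Efun, Scl_apply]
  rw [hmu, ← hRx, hE]
  have hw : (1 / Real.sqrt 2) * (1 / Real.sqrt 2) = 1/2 := by
    rw [div_mul_div_comm, hsq2]; norm_num
  linear_combination (Efun a x * ((ν^2 + Real.exp (-2*(Rcl x))) + a^2)
    * macdonaldK ν (Real.exp (-(Rcl x)))) * hw
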